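/- Suppose (Σ⁺, σ) is a one-sided countable Markov shift and f : Σ⁺ → ℝ is locally Hölder continuous. Then there is a sequence ε_k → 0 (depending only on the Hölder constants of f) with the following property: for every k ∈ ℕ, every nonempty k-cylinder p ∈ Λ_k, every non-periodic point z_p ∈ p, and every n ≥ k, the map Ψ_p^n sending x ∈ Fix^n ∩ p to the concatenation x₁⋯x_n z_p (the point y with y_i = x_i for i ≤ n and σ^n(y) = z_p) is a well-defined bijection from Fix^n ∩ p onto σ^{−n}(z_p) ∩ p, and |S_n f(x) − S_n f(Ψ_p^n(x))| ≤ ε_k for every x ∈ Fix^n ∩ p. -/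
import Mathlib


open scoped ENNReal NNReal
open Filter MeasureTheory Set

namespace CMS

variable {A : Type*}

/-- The one-sided countable Markov shift space determined by transition matrix `T`. -/
def SigmaPlus (T : A → A → Prop) : Set (ℕ → A) :=
  {x | ∀ i, T (x i) (x (i + 1))}

/-- The shift map on `SigmaPlus T`. -/
def shift (T : A → A → Prop) (x : SigmaPlus T) : SigmaPlus T :=
  ⟨fun i => x.1 (i + 1), fun i => x.2 (i + 1)⟩

/-- Topological mixing. -/
def TopMixing (T : A → A → Prop) : Prop :=
  ∀ a b : A, ∃ N : ℕ, ∀ n ≥ N, ∃ x : SigmaPlus T, x.1 0 = a ∧ x.1 n = b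

/-- The big images and preimages property. -/
def BIP (T : A → A → Prop) : Prop :=
  ∃ B : Finset A, ∀ a : A, ∃ b₀ ∈ B, ∃ b₁ ∈ B, T b₀ a ∧ T a b₁

/-- Locally Hölder continuous. -/
def LocHolder (T : A → A → Prop) (f : SigmaPlus T → ℝ) : Prop :=
  ∃ C > (0 : ℝ), ∃ α > (0 : ℝ), ∀ n : ℕ, 1 ≤ n → ∀ x y : SigmaPlus T,
    (∀ i < n, x.1 i = y.1 i) → |f x - f y| ≤ C * Real.exp (-α * n)

/-- Birkhoff (ergodic) sum `S_n f`. -/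
noncomputable def birkhoff (T : A → A → Prop) (f : SigmaPlus T → ℝ) (n : ℕ)
    (x : SigmaPlus T) : ℝ :=
  ∑ i ∈ Finset.range n, f ((shift T)^[i] x)

/-- Points of period `n`: `Fix^n`. -/
def Mfix (T : A → A → Prop) (n : ℕ) : Set (SigmaPlus T) :=
  {x | (shift T)^[n] x = x}

/-- `S(f,a)`, the sup of `f` on the cylinder of the letter `a`. -/
noncomputable def Ssup (T : A → A → Prop) (f : SigmaPlus T → ℝ) (a : A) : ℝ :=
  sSup (f '' {x : SigmaPlus T | x.1 0 = a})

/-- `I(f,a)`, the inf of `f` on the cylinder of the letter `a`. -/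
noncomputable def Iinf (T : A → A → Prop) (f : SigmaPlus T → ℝ) (a : A) : ℝ :=
  sInf (f '' {x : SigmaPlus T | x.1 0 = a})

/-- The set of `s > 0` where `Z₁(f,s) = Σ_a e^{-s S(f,a)}` converges. -/
def convSet (T : A → A → Prop) (f : SigmaPlus T → ℝ) : Set ℝ :=
  {s | 0 < s ∧ Summable fun a : A => Real.exp (-s * Ssup T f a)}

/-- The critical exponent `d(f)` of `Z₁(f,·)`. -/
noncomputable def dcrit (T : A → A → Prop) (f : SigmaPlus T → ℝ) : ℝ :=
  sInf (convSet T f)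

/-- Eventually positive. -/
def EvPositive (T : A → A → Prop) (f : SigmaPlus T → ℝ) : Prop :=
  ∃ N : ℕ, ∃ B > (0 : ℝ), ∀ n ≥ N, ∀ x : SigmaPlus T, B < birkhoff T f n x

/-- Strictly positive: `inf f > 0`. -/
def StrictPositive (T : A → A → Prop) (f : SigmaPlus T → ℝ) : Prop :=
  ∃ c > (0 : ℝ), ∀ x : SigmaPlus T, c ≤ f x

/-- Non-arithmetic: the subgroup of `ℝ` generated by the periods is not cyclic. -/
def NonArithmetic (T : A → A → Prop) (f : SigmaPlus T → ℝ) : Prop :=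
  ¬ ∃ c : ℝ, ∀ n : ℕ, 1 ≤ n → ∀ x ∈ Mfix T n, ∃ m : ℤ, birkhoff T f n x = m * c

/-- Extended logarithm `ℝ≥0∞ → EReal`. -/
noncomputable def elog (x : ℝ≥0∞) : EReal :=
  if x = 0 then ⊥ else if x = ⊤ then ⊤ else ((Real.log x.toReal : ℝ) : EReal)

/-- The Gurevich partition sum `Z_n(f,a)` valued in `ℝ≥0∞`. -/
noncomputable def Zpart (T : A → A → Prop) (f : SigmaPlus T → ℝ) (a : A) (n : ℕ) : ℝ≥0∞ :=
  ∑' x : {x : SigmaPlus T // x ∈ Mfix T n ∧ x.1 0 = a},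
    ENNReal.ofReal (Real.exp (birkhoff T f n x))

/-- `p` is the Gurevich pressure of `f`. -/
def HasGurevichPressure (T : A → A → Prop) (f : SigmaPlus T → ℝ) (p : EReal) : Prop :=
  ∀ a : A, Tendsto (fun n : ℕ => (((n : ℝ)⁻¹ : ℝ) : EReal) * elog (Zpart T f a n))
    atTop (nhds p)

/-- `ℳ_f(n,t)`. -/
def Mset (T : A → A → Prop) (f : SigmaPlus T → ℝ) (n : ℕ) (t : ℝ) : Set (SigmaPlus T) :=
  {x | x ∈ Mfix T n ∧ birkhoff T f n x ≤ t}

/-- `M_f(t) = Σ_{n≥1} (1/n) #ℳ_f(n,t)`, valued in `[0,∞]`. -/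
noncomputable def Mcount (T : A → A → Prop) (f : SigmaPlus T → ℝ) (t : ℝ) : ℝ≥0∞ :=
  ∑' n : ℕ, ((n : ℝ≥0∞) + 1)⁻¹ * ((Mset T f (n + 1) t).encard : ℝ≥0∞)

/-- `ℛ_f(k,t)`. -/
def Rset (T : A → A → Prop) (f : SigmaPlus T → ℝ) (k : ℕ) (t : ℝ) : Set (SigmaPlus T) :=
  {x | x ∈ Mset T f k t ∧ ∀ n : ℕ, 1 ≤ n → n < k → x ∉ Mset T f n t}

/-- `R_f(t) = Σ_{k≥1} (1/k) #ℛ_f(k,t)`, valued in `[0,∞]`. -/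
noncomputable def Rcount (T : A → A → Prop) (f : SigmaPlus T → ℝ) (t : ℝ) : ℝ≥0∞ :=
  ∑' k : ℕ, ((k : ℝ≥0∞) + 1)⁻¹ * ((Rset T f (k + 1) t).encard : ℝ≥0∞)

/-- The cylinder determined by a word `w` of length `k`. -/
def cylinder (T : A → A → Prop) {k : ℕ} (w : Fin k → A) : Set (SigmaPlus T) :=
  {x | ∀ i : Fin k, x.1 i = w i}

/-- A σ-invariant Gibbs state for `f` (normalized so that `P(f) = 0`). -/
def GibbsState [MeasurableSpace A] (T : A → A → Prop) (f : SigmaPlus T → ℝ)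
    (μ : Measure (SigmaPlus T)) : Prop :=
  IsProbabilityMeasure μ ∧ MeasurePreserving (shift T) μ μ ∧
    ∃ B > (1 : ℝ), ∀ (n : ℕ), 1 ≤ n → ∀ (w : Fin n → A), ∀ x ∈ cylinder T w,
      1 / B ≤ (μ (cylinder T w)).toReal / Real.exp (birkhoff T f n x) ∧
        (μ (cylinder T w)).toReal / Real.exp (birkhoff T f n x) ≤ B

/-- The transfer (Ruelle–Perron–Frobenius) operator. -/
noncomputable def transfer (T : A → A → Prop) (g φ : SigmaPlus T → ℝ)
    (x : SigmaPlus T) : ℝ :=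
  ∑' y : {y : SigmaPlus T // shift T y = x}, Real.exp (g y) * φ y

/-- The renewal function `N_f(φ,x,t)`, valued in `[0,∞]`. -/
noncomputable def renewal (T : A → A → Prop) (f φ : SigmaPlus T → ℝ)
    (x : SigmaPlus T) (t : ℝ) : ℝ≥0∞ :=
  ∑' n : ℕ, ∑' y : {y : SigmaPlus T // (shift T)^[n] y = x},
    ENNReal.ofReal (if birkhoff T f n y ≤ t then φ y else 0)

/-- Auxiliary: coordinates of iterates of the shift. -/
lemma shift_iterate_apply (T : A → A → Prop) (m : ℕ) (x : SigmaPlus T) (i : ℕ) :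
    ((shift T)^[m] x).1 i = x.1 (i + m) := by
  induction m generalizing x with
  | zero => rfl
  | succ m ih =>
    rw [Function.iterate_succ_apply, ih]
    rfl

/-- Auxiliary: mod arithmetic for successors. -/
lemma succ_mod_aux (n i : ℕ) (hn : 0 < n) :
    (i + 1) % n = if i % n + 1 = n then 0 else i % n + 1 := by
  have h1 : (i + 1) % n = (i % n + 1) % n := by
    conv_lhs => rw [← Nat.div_add_mod i n]
    rw [Nat.add_assoc, Nat.add_comm (n * (i / n)), Nat.add_mul_mod_self_left]
  rw [h1]
  have hlt : i % n < n := Nat.mod_lt _ hn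
  by_cases h : i % n + 1 = n
  · rw [if_pos h, h, Nat.mod_self]
  · rw [if_neg h, Nat.mod_eq_of_lt (by omega)]

/-- Replacing periodic points by preimages of a sample point: for every
nonempty `k`-cylinder with a non-periodic sample point `z` and every `n ≥ k`,
concatenation gives a bijection `Fix^n ∩ p → σ^{-n}(z) ∩ p` which changes
Birkhoff sums by at most `ε_k`, where `ε_k → 0`. -/
theorem fixed_points_preimages_bijection
    {A : Type*} [Countable A] (T : A → A → Prop)
    (f : SigmaPlus T → ℝ)
    (hhold : LocHolder T f) :
    ∃ ε : ℕ → ℝ, Tendsto ε atTop (nhds (0 : ℝ)) ∧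
      ∀ (k : ℕ), 1 ≤ k → ∀ (w : Fin k → A) (z : SigmaPlus T),
        z ∈ cylinder T w →
        (∀ m : ℕ, 1 ≤ m → (shift T)^[m] z ≠ z) →
        ∀ n : ℕ, k ≤ n →
          ∃ Ψ : {x : SigmaPlus T // x ∈ Mfix T n ∧ x ∈ cylinder T w} →
                {y : SigmaPlus T // (shift T)^[n] y = z ∧ y ∈ cylinder T w},
            Function.Bijective Ψ ∧
            ∀ x : {x : SigmaPlus T // x ∈ Mfix T n ∧ x ∈ cylinder T w},
              (∀ i < n, (Ψ x).1.1 i = x.1.1 i) ∧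
              |birkhoff T f n x.1 - birkhoff T f n (Ψ x).1| ≤ ε k := by
  obtain ⟨C, hC, α, hα, Hf⟩ := hhold
  set r : ℝ := Real.exp (-α) with hr_def
  have hr0 : 0 < r := Real.exp_pos _
  have hr1 : r < 1 := Real.exp_lt_one_iff.mpr (by linarith)
  have hr1' : 0 < 1 - r := by linarith
  have hterm : ∀ m : ℕ, Real.exp (-α * (m : ℝ)) = r ^ m := fun m => by
    rw [mul_comm, Real.exp_nat_mul]
  refine ⟨fun k => C * r ^ k / (1 - r), ?_, ?_⟩
  · have h := ((tendsto_pow_atTop_nhds_zero_of_lt_one hr0.le hr1).const_mul C).div_const (1 - r)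
    simpa using h
  intro k hk w z hz _hznp n hn
  have hn0 : 0 < n := lt_of_lt_of_le hk hn
  -- periodicity of fixed points
  have hper : ∀ x : SigmaPlus T, x ∈ Mfix T n → ∀ i, x.1 (i + n) = x.1 i := by
    intro x hx i
    have h1 := shift_iterate_apply T n x i
    rw [hx] at h1
    exact h1.symm
  -- forward map is well defined
  have hFmem : ∀ x : SigmaPlus T, x ∈ Mfix T n → x ∈ cylinder T w →
      (fun i => if i < n then x.1 i else z.1 (i - n)) ∈ SigmaPlus T := by
    intro x hx1 hx2 i
    show T (if i < n then x.1 i else z.1 (i - n)) (if i + 1 < n then x.1 (i+1) else z.1 (i + 1 - n))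
    by_cases h1 : i + 1 < n
    · rw [if_pos (by omega : i < n), if_pos h1]
      exact x.2 i
    · by_cases h2 : i < n
      · have hi : i + 1 = n := by omega
        rw [if_pos h2, if_neg h1]
        have hzx : z.1 (i + 1 - n) = x.1 (i + 1) := by
          rw [hi, Nat.sub_self]
          calc z.1 0 = w ⟨0, hk⟩ := hz ⟨0, hk⟩
            _ = x.1 0 := (hx2 ⟨0, hk⟩).symm
            _ = x.1 (0 + n) := (hper x hx1 0).symm
            _ = x.1 n := by rw [Nat.zero_add]
        rw [hzx]
        exact x.2 i
      · rw [if_neg h1, if_neg h2]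
        have hne : i + 1 - n = (i - n) + 1 := by omega
        rw [hne]
        exact z.2 (i - n)
  have hFfix : ∀ (x : SigmaPlus T) (hx1 : x ∈ Mfix T n) (hx2 : x ∈ cylinder T w),
      (shift T)^[n] (⟨fun i => if i < n then x.1 i else z.1 (i - n),
        hFmem x hx1 hx2⟩ : SigmaPlus T) = z := by
    intro x hx1 hx2
    apply Subtype.ext
    funext i
    rw [shift_iterate_apply]
    show (if i + n < n then x.1 (i + n) else z.1 (i + n - n)) = z.1 i
    rw [if_neg (by omega), Nat.add_sub_cancel]
  have hFcyl : ∀ (x : SigmaPlus T) (hx1 : x ∈ Mfix T n) (hx2 : x ∈ cylinder T w),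
      (⟨fun i => if i < n then x.1 i else z.1 (i - n),
        hFmem x hx1 hx2⟩ : SigmaPlus T) ∈ cylinder T w := by
    intro x hx1 hx2 i
    show (if (i : ℕ) < n then x.1 i else z.1 ((i : ℕ) - n)) = w i
    rw [if_pos (lt_of_lt_of_le i.2 hn)]
    exact hx2 i
  -- backward map is well defined
  have hGmem : ∀ (y : SigmaPlus T), (shift T)^[n] y = z → y ∈ cylinder T w →
      (fun i => y.1 (i % n)) ∈ SigmaPlus T := by
    intro y hy1 hy2 i
    show T (y.1 (i % n)) (y.1 ((i + 1) % n))
    have hmlt : i % n < n := Nat.mod_lt _ hn0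
    rw [succ_mod_aux n i hn0]
    by_cases h : i % n + 1 = n
    · rw [if_pos h]
      have hy0n : y.1 0 = y.1 n := by
        have h1 : y.1 n = z.1 0 := by
          have h2 := shift_iterate_apply T n y 0
          rw [hy1] at h2
          rw [Nat.zero_add] at h2
          exact h2.symm
        rw [h1]
        calc y.1 0 = w ⟨0, hk⟩ := hy2 ⟨0, hk⟩
          _ = z.1 0 := (hz ⟨0, hk⟩).symm
      have h3 := y.2 (i % n)
      rw [h] at h3
      rw [hy0n]
      exact h3
    · rw [if_neg h]
      exact y.2 (i % n)
  -- two fixed points agreeing on a period agree everywhere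
  have hext : ∀ (x x' : SigmaPlus T), x ∈ Mfix T n → x' ∈ Mfix T n →
      (∀ i < n, x.1 i = x'.1 i) → x = x' := by
    intro x x' hx hx' h
    apply Subtype.ext
    funext i
    induction i using Nat.strong_induction_on with
    | _ i ih =>
      by_cases hi : i < n
      · exact h i hi
      · have h1 : x.1 i = x.1 (i - n) := by
          conv_lhs => rw [show i = (i - n) + n by omega]
          exact hper x hx (i - n)
        have h2 : x'.1 i = x'.1 (i - n) := by
          conv_lhs => rw [show i = (i - n) + n by omega]
          exact hper x' hx' (i - n)
        rw [h1, h2]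
        exact ih (i - n) (by omega)
  refine ⟨fun x => ⟨⟨fun i => if i < n then x.1.1 i else z.1 (i - n),
      hFmem x.1 x.2.1 x.2.2⟩, hFfix x.1 x.2.1 x.2.2, hFcyl x.1 x.2.1 x.2.2⟩, ⟨?_, ?_⟩, ?_⟩
  · -- injective
    intro x x' hxx'
    apply Subtype.ext
    apply hext x.1 x'.1 x.2.1 x'.2.1
    intro i hi
    have h2 : (if i < n then x.1.1 i else z.1 (i - n))
        = (if i < n then x'.1.1 i else z.1 (i - n)) :=
      congrArg (fun y : {y : SigmaPlus T // (shift T)^[n] y = z ∧ y ∈ cylinder T w} => y.1.1 i) hxx'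
    rw [if_pos hi, if_pos hi] at h2
    exact h2
  · -- surjective
    intro y
    have hy1 := y.2.1
    have hy2 := y.2.2
    refine ⟨⟨⟨fun i => y.1.1 (i % n), hGmem y.1 hy1 hy2⟩, ?_, ?_⟩, ?_⟩
    · apply Subtype.ext
      funext i
      rw [shift_iterate_apply]
      show y.1.1 ((i + n) % n) = y.1.1 (i % n)
      rw [Nat.add_mod_right]
    · intro i
      show y.1.1 ((i : ℕ) % n) = w i
      rw [Nat.mod_eq_of_lt (lt_of_lt_of_le i.2 hn)]
      exact hy2 i
    · apply Subtype.ext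
      apply Subtype.ext
      funext i
      show (if i < n then y.1.1 (i % n) else z.1 (i - n)) = y.1.1 i
      by_cases hi : i < n
      · rw [if_pos hi, Nat.mod_eq_of_lt hi]
      · rw [if_neg hi]
        have h2 := shift_iterate_apply T n y.1 (i - n)
        rw [hy1] at h2
        rw [show (i - n) + n = i from by omega] at h2
        exact h2
  · -- coordinates agree and Birkhoff sums are close
    intro x
    constructor
    · intro i hi
      show (if i < n then x.1.1 i else z.1 (i - n)) = x.1.1 i
      rw [if_pos hi]
    · -- Birkhoff sums
      have hagree : ∀ i < n, ∀ j < n - i + k,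
          ((shift T)^[i] x.1).1 j =
          ((shift T)^[i] (⟨fun i => if i < n then x.1.1 i else z.1 (i - n),
            hFmem x.1 x.2.1 x.2.2⟩ : SigmaPlus T)).1 j := by
        intro i hi j hj
        rw [shift_iterate_apply, shift_iterate_apply]
        show x.1.1 (j + i) = (if j + i < n then x.1.1 (j + i) else z.1 (j + i - n))
        by_cases hcase : j + i < n
        · rw [if_pos hcase]
        · rw [if_neg hcase]
          have hlt : j + i - n < k := by omega
          have e1 : z.1 (j + i - n) = w ⟨j + i - n, hlt⟩ := hz ⟨j + i - n, hlt⟩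
          have e2 : x.1.1 (j + i - n) = w ⟨j + i - n, hlt⟩ := x.2.2 ⟨j + i - n, hlt⟩
          have e3 : x.1.1 (j + i) = x.1.1 (j + i - n) := by
            conv_lhs => rw [show j + i = (j + i - n) + n by omega]
            exact hper x.1 x.2.1 (j + i - n)
          rw [e3, e2, e1]
      have hptw : ∀ i ∈ Finset.range n,
          |f ((shift T)^[i] x.1) - f ((shift T)^[i]
            (⟨fun i => if i < n then x.1.1 i else z.1 (i - n),
              hFmem x.1 x.2.1 x.2.2⟩ : SigmaPlus T))| ≤ C * (r ^ k * r ^ (n - i)) := by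
        intro i hi
        have hi' : i < n := Finset.mem_range.mp hi
        have h1 := Hf (n - i + k) (by omega) _ _ (hagree i hi')
        calc |f ((shift T)^[i] x.1) - f ((shift T)^[i] _)|
            ≤ C * Real.exp (-α * ((n - i + k : ℕ) : ℝ)) := h1
          _ = C * (r ^ k * r ^ (n - i)) := by rw [hterm, pow_add]; ring
      have hsum : ∑ i ∈ Finset.range n, r ^ (n - i) ≤ (1 - r)⁻¹ := by
        have h2 : ∑ i ∈ Finset.range n, r ^ (n - i)
            = ∑ i ∈ Finset.range n, r ^ (i + 1) := by
          calc ∑ i ∈ Finset.range n, r ^ (n - i)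
              = ∑ i ∈ Finset.range n, (fun j => r ^ (j + 1)) (n - 1 - i) :=
                Finset.sum_congr rfl (fun i hi => by
                  have := Finset.mem_range.mp hi
                  show r ^ (n - i) = r ^ (n - 1 - i + 1)
                  congr 1
                  omega)
            _ = ∑ i ∈ Finset.range n, r ^ (i + 1) :=
                Finset.sum_range_reflect (fun j => r ^ (j + 1)) n
        rw [h2]
        calc ∑ i ∈ Finset.range n, r ^ (i + 1)
            ≤ ∑ i ∈ Finset.range n, r ^ i :=
              Finset.sum_le_sum (fun i _ =>
                pow_le_pow_of_le_one hr0.le hr1.le (Nat.le_succ i))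
          _ ≤ ∑' i : ℕ, r ^ i :=
              Summable.sum_le_tsum _ (fun i _ => pow_nonneg hr0.le i)
                (summable_geometric_of_lt_one hr0.le hr1)
          _ = (1 - r)⁻¹ := tsum_geometric_of_lt_one hr0.le hr1
      calc |birkhoff T f n x.1 - birkhoff T f n _|
          = |∑ i ∈ Finset.range n, (f ((shift T)^[i] x.1) - f ((shift T)^[i]
              (⟨fun i => if i < n then x.1.1 i else z.1 (i - n),
                hFmem x.1 x.2.1 x.2.2⟩ : SigmaPlus T)))| := by
            rw [birkhoff, birkhoff, Finset.sum_sub_distrib]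
        _ ≤ ∑ i ∈ Finset.range n, |f ((shift T)^[i] x.1) - f ((shift T)^[i]
              (⟨fun i => if i < n then x.1.1 i else z.1 (i - n),
                hFmem x.1 x.2.1 x.2.2⟩ : SigmaPlus T))| :=
            Finset.abs_sum_le_sum_abs _ _
        _ ≤ ∑ i ∈ Finset.range n, C * (r ^ k * r ^ (n - i)) := Finset.sum_le_sum hptw
        _ = (C * r ^ k) * ∑ i ∈ Finset.range n, r ^ (n - i) := by
            rw [Finset.mul_sum]
            exact Finset.sum_congr rfl (fun i _ => by ring)
        _ ≤ (C * r ^ k) * (1 - r)⁻¹ :=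
            mul_le_mul_of_nonneg_left hsum (by positivity)
        _ = C * r ^ k / (1 - r) := by rw [div_eq_mul_inv]

end CMS
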